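/- For all integers m ≥ 1 and n ≥ 1, the following identity holds in ℂ: (−1)^{mn} · 2^m · ∏_{h=1}^{m} T_{2n}(i·cos(hπ/(2m+1))) = ∏_{h=1}^{m} ∏_{k=1}^{n} (4·cos²(hπ/(2m+1)) + 4·cos²((2k−1)π/(4n))), where i is the imaginary unit and the right-hand side is a real number regarded as a complex number. -/

import Mathlib

open Real Polynomial

-- helper: Icc 1 n product as range product
lemma prod_Icc_one_eq_prod_range {M : Type*} [CommMonoid M] (f : ℕ → M) (n : ℕ) :
    ∏ k ∈ Finset.Icc 1 n, f k = ∏ j ∈ Finset.range n, f (j + 1) := by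
  induction n with
  | zero => simp
  | succ n ih =>
      rw [Finset.prod_range_succ, ← ih, ← Finset.prod_Icc_succ_top (Nat.le_add_left 1 n)]

-- Lemma 1: w^(2n) + 1 = ∏_{j<2n} (w - exp((2j+1)πi/(2n)))
lemma pow_add_one_eq_prod (n : ℕ) (hn : 1 ≤ n) (w : ℂ) :
    w ^ (2 * n) + 1 =
      ∏ j ∈ Finset.range (2 * n),
        (w - Complex.exp ((2 * (j : ℂ) + 1) * (π : ℂ) * Complex.I / (2 * n))) := by
  have h2n : (2 * n : ℕ) ≠ 0 := by omega
  have hn0 : ((2 * n : ℕ) : ℂ) ≠ 0 := Nat.cast_ne_zero.mpr h2n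
  have hζ := Complex.isPrimitiveRoot_exp (2 * n) h2n
  have e : (Complex.exp ((π : ℂ) * Complex.I / (2 * n))) ^ (2 * n) = -1 := by
    rw [← Complex.exp_nat_mul]
    have h2 : (2 * (n:ℂ)) ≠ 0 := by push_cast at hn0; exact hn0
    rw [show ((2 * n : ℕ) : ℂ) * ((π : ℂ) * Complex.I / (2 * n)) = (π : ℂ) * Complex.I by
      push_cast; field_simp; exact div_self (Nat.cast_ne_zero.mpr (by omega))]
    exact Complex.exp_pi_mul_I
  have key := X_pow_sub_C_eq_prod hζ (by omega : 0 < 2 * n) e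
  have := congrArg (Polynomial.eval w) key
  simp only [Polynomial.eval_sub, Polynomial.eval_pow, Polynomial.eval_X, Polynomial.eval_C,
    Polynomial.eval_prod] at this
  rw [show w ^ (2*n) + 1 = w ^ (2*n) - (-1) by ring, this]
  refine Finset.prod_congr rfl fun j hj => ?_
  rw [← Complex.exp_nat_mul, ← Complex.exp_add]
  congr 1
  push_cast
  field_simp

-- Lemma A: the key scalar identity
lemma key_identity (n : ℕ) (hn : 1 ≤ n) (u : ℂ) :
    ∏ k ∈ Finset.Icc 1 n,
        (2 * Complex.cos (((2 * (k : ℝ) - 1) * π / (2 * n) : ℝ) : ℂ) - 2 * Complex.cos u) =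
      (-1) ^ n * 2 * Complex.cos (n * u) := by
  have hn0 : ((n : ℂ)) ≠ 0 := Nat.cast_ne_zero.mpr (by omega)
  set w := Complex.exp (u * Complex.I) with hw
  have hwne : w ≠ 0 := Complex.exp_ne_zero _
  have hcosu : 2 * Complex.cos u = w + w⁻¹ := by
    rw [Complex.cos, hw, ← Complex.exp_neg]; ring
  -- per-factor
  have hfac : ∀ γ : ℝ,
      2 * Complex.cos (γ : ℂ) - 2 * Complex.cos u =
        -w⁻¹ * ((w - Complex.exp ((γ : ℂ) * Complex.I)) *
          (w - Complex.exp (-((γ : ℂ) * Complex.I)))) := by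
    intro γ
    set a := Complex.exp ((γ:ℂ) * Complex.I) with hadef
    have hane : a ≠ 0 := Complex.exp_ne_zero _
    have hcg : 2 * Complex.cos (γ : ℂ) = a + a⁻¹ := by
      rw [Complex.cos, hadef, ← Complex.exp_neg]; ring
    have hinv : Complex.exp (-((γ:ℂ) * Complex.I)) = a⁻¹ := by rw [Complex.exp_neg]
    rw [hcg, hcosu, hinv]
    field_simp
    ring
  have h2nC : (2 * (n:ℂ)) ≠ 0 := mul_ne_zero two_ne_zero hn0
  rw [prod_Icc_one_eq_prod_range]
  have hpair : ∀ j ∈ Finset.range n,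
      2 * Complex.cos (((2 * ((j + 1 : ℕ) : ℝ) - 1) * π / (2 * n) : ℝ) : ℂ) - 2 * Complex.cos u
        = -w⁻¹ * ((w - Complex.exp ((2 * (j : ℂ) + 1) * (π : ℂ) * Complex.I / (2 * n))) *
            (w - Complex.exp ((2 * ((2 * n - 1 - j : ℕ) : ℂ) + 1) * (π : ℂ) * Complex.I
              / (2 * n)))) := by
    intro j hj
    simp only [Finset.mem_range] at hj
    set γ : ℝ := (2 * ((j + 1 : ℕ) : ℝ) - 1) * π / (2 * n) with hγ
    have e1 : Complex.exp ((γ : ℂ) * Complex.I)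
        = Complex.exp ((2 * (j : ℂ) + 1) * (π : ℂ) * Complex.I / (2 * n)) := by
      congr 1
      rw [hγ]; push_cast; field_simp
      ring
    have hc : ((2 * n - 1 - j : ℕ) : ℂ) = 2 * (n : ℂ) - 1 - (j : ℂ) := by
      have h := congrArg (Nat.cast : ℕ → ℂ) (show (2 * n - 1 - j) + (j + 1) = 2 * n by omega)
      push_cast at h
      linear_combination h
    have e2 : Complex.exp (-((γ : ℂ) * Complex.I))
        = Complex.exp ((2 * ((2 * n - 1 - j : ℕ) : ℂ) + 1) * (π : ℂ) * Complex.I / (2 * n)) := by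
      rw [hc, show (2 * (2 * (n : ℂ) - 1 - (j : ℂ)) + 1) * (π : ℂ) * Complex.I / (2 * n)
          = 2 * π * Complex.I + -((γ : ℂ) * Complex.I) by
        rw [hγ]; push_cast; field_simp; ring]
      rw [Complex.exp_add, Complex.exp_two_pi_mul_I, one_mul]
    rw [hfac γ, e1, e2]
  rw [Finset.prod_congr rfl hpair, Finset.prod_mul_distrib, Finset.prod_const,
    Finset.card_range]
  have hsplit : ∏ j ∈ Finset.range n,
      ((w - Complex.exp ((2 * (j : ℂ) + 1) * (π : ℂ) * Complex.I / (2 * n))) *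
        (w - Complex.exp ((2 * ((2 * n - 1 - j : ℕ) : ℂ) + 1) * (π : ℂ) * Complex.I / (2 * n))))
      = w ^ (2 * n) + 1 := by
    rw [Finset.prod_mul_distrib, pow_add_one_eq_prod n hn w]
    have hrefl := Finset.prod_range_reflect
      (fun j => w - Complex.exp ((2 * ((n + j : ℕ) : ℂ) + 1) * (π : ℂ) * Complex.I / (2 * n))) n
    have h2 : ∏ j ∈ Finset.range n,
        (w - Complex.exp ((2 * ((2 * n - 1 - j : ℕ) : ℂ) + 1) * (π : ℂ) * Complex.I / (2 * n)))
        = ∏ j ∈ Finset.range n,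
        (w - Complex.exp ((2 * ((n + j : ℕ) : ℂ) + 1) * (π : ℂ) * Complex.I / (2 * n))) := by
      rw [← hrefl]
      refine Finset.prod_congr rfl fun j hj => ?_
      simp only [Finset.mem_range] at hj
      have hjj : 2 * n - 1 - j = n + (n - 1 - j) := by omega
      rw [hjj]
    rw [h2, show 2 * n = n + n by ring, Finset.prod_range_add]
  rw [hsplit]
  have h1 : Complex.exp ((n : ℂ) * u * Complex.I) = w ^ n := by
    rw [mul_assoc, Complex.exp_nat_mul, hw]
  have h2 : Complex.exp (-((n : ℂ) * u * Complex.I)) = (w ^ n)⁻¹ := by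
    rw [Complex.exp_neg, h1]
  have h2' : Complex.exp (-((n : ℂ) * u) * Complex.I) = (w ^ n)⁻¹ := by
    rw [neg_mul, h2]
  have hcn : 2 * Complex.cos ((n : ℂ) * u) = w ^ n + (w ^ n)⁻¹ := by
    rw [Complex.cos, h1, h2']; ring
  have hwn : w ^ n ≠ 0 := pow_ne_zero _ hwne
  rw [show ((-1 : ℂ)) ^ n * 2 * Complex.cos ((n : ℂ) * u)
      = (-1) ^ n * (w ^ n + (w ^ n)⁻¹) by rw [← hcn]; ring]
  rw [show (-w⁻¹ : ℂ) ^ n = (-1) ^ n * (w ^ n)⁻¹ by rw [neg_pow, inv_pow]]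
  rw [show w ^ (2 * n) = w ^ n * w ^ n by rw [two_mul, pow_add]]
  field_simp

lemma lemB (n : ℕ) (hn : 1 ≤ n) (c : ℝ) :
    (-1 : ℂ) ^ n * 2 * (Polynomial.Chebyshev.T ℂ (2 * n)).eval (Complex.I * (c : ℂ)) =
      ((∏ k ∈ Finset.Icc 1 n,
        (4 * c ^ 2 + 4 * Real.cos ((2 * k - 1) * π / (4 * n)) ^ 2) : ℝ) : ℂ) := by
  obtain ⟨z, hz⟩ := Complex.cos_surjective (Complex.I * (c : ℂ))
  rw [← hz, Polynomial.Chebyshev.T_complex_cos]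
  have hnR : (n : ℝ) ≠ 0 := Nat.cast_ne_zero.mpr (by omega)
  rw [Complex.ofReal_prod]
  rw [show (((2 * n : ℤ) : ℂ)) * z = (n : ℂ) * (2 * z) by push_cast; ring]
  rw [← key_identity n hn (2 * z)]
  refine Finset.prod_congr rfl fun k hk => ?_
  have hcos2z : Complex.cos (2 * z) = -2 * (c : ℂ) ^ 2 - 1 := by
    rw [Complex.cos_two_mul, hz, mul_pow, Complex.I_sq]; ring
  have hreal : (2 : ℝ) * Real.cos ((2 * (k : ℝ) - 1) * π / (2 * n)) =
      4 * Real.cos ((2 * (k : ℝ) - 1) * π / (4 * n)) ^ 2 - 2 := by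
    rw [show (2 * (k : ℝ) - 1) * π / (2 * n) = 2 * ((2 * (k : ℝ) - 1) * π / (4 * n)) by
      field_simp; ring]
    rw [Real.cos_two_mul]; ring
  rw [← Complex.ofReal_cos, hcos2z]
  push_cast
  have hc := congrArg (Complex.ofReal) hreal
  push_cast at hc
  linear_combination hc

theorem chebyshevT_product_eq_double_product (m n : ℕ) (hm : 1 ≤ m) (hn : 1 ≤ n) :
    (-1 : ℂ) ^ (m * n) * 2 ^ m *
      ∏ h ∈ Finset.Icc 1 m,
        (Polynomial.Chebyshev.T ℂ (2 * n)).eval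
          (Complex.I * (Real.cos (h * π / (2 * m + 1)) : ℂ)) =
      ((∏ h ∈ Finset.Icc 1 m, ∏ k ∈ Finset.Icc 1 n,
        (4 * Real.cos (h * π / (2 * m + 1)) ^ 2 +
         4 * Real.cos ((2 * k - 1) * π / (4 * n)) ^ 2) : ℝ) : ℂ) := by
  rw [Complex.ofReal_prod]
  rw [show (-1 : ℂ) ^ (m * n) * 2 ^ m = ∏ h ∈ Finset.Icc 1 m, ((-1 : ℂ) ^ n * 2) by
    rw [Finset.prod_const, Nat.card_Icc, Nat.add_sub_cancel, mul_pow, ← pow_mul, mul_comm n m]]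
  rw [← Finset.prod_mul_distrib]
  exact Finset.prod_congr rfl fun h hh => lemB n hn _
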